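/- arXiv:math/0506268 — 3 statements merged into one kernel-verified Lean document; each statement's English description precedes it below -/
import Mathlib

section
/- For any path p in the double quiver Q̄, the necklace derivation d_p annihilates the element w - λ, i.e., d_p(w) = 0, where w = Σ_{a∈Q} [a, a*] = Σ_{a∈Q̄} ε(a) a a* in K Q̄. Explicitly, d_p(w) = Σ_{j=1}^{ℓ(p)} p_{>j} p_{<j} p_j − Σ_{j=1}^{ℓ(p)} p_j p_{>j} p_{<j} = 0. -/
open scoped Classical

/-- A (K-linear) derivation of a possibly noncommutative algebra. -/
def IsDerivation (K : Type*) {A : Type*} [CommRing K] [Ring A] [Algebra K A]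
    (d : A →ₗ[K] A) : Prop :=
  ∀ a b : A, d (a * b) = a * d b + d a * b

/-- The K-submodule [A,A] spanned by commutators. -/
def commSpan (K : Type*) (A : Type*) [CommRing K] [Ring A] [Algebra K A] : Submodule K A :=
  Submodule.span K {x : A | ∃ a b : A, x = a * b - b * a}

section PathAlgebra

variable (K : Type*) [CommRing K]
variable (V : Type*) [Fintype V] (F : Type*) (s t : F → V)

/-- Relations presenting the path algebra of a quiver with vertex set `V`,
arrow set `F`, and source/target maps `s`, `t`: the trivial paths are
orthogonal idempotents summing to 1, and they act correctly on arrows.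
Generators: `Sum.inl a` is the arrow `a`, `Sum.inr v` is the trivial path `e_v`. -/
inductive PathRel : FreeAlgebra K (F ⊕ V) → FreeAlgebra K (F ⊕ V) → Prop
  | vert (v w : V) : PathRel (FreeAlgebra.ι K (Sum.inr v : F ⊕ V) * FreeAlgebra.ι K (Sum.inr w))
      (if v = w then FreeAlgebra.ι K (Sum.inr v : F ⊕ V) else 0)
  | left (a : F) : PathRel (FreeAlgebra.ι K (Sum.inr (s a) : F ⊕ V) * FreeAlgebra.ι K (Sum.inl a))
      (FreeAlgebra.ι K (Sum.inl a : F ⊕ V))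
  | right (a : F) : PathRel (FreeAlgebra.ι K (Sum.inl a : F ⊕ V) * FreeAlgebra.ι K (Sum.inr (t a)))
      (FreeAlgebra.ι K (Sum.inl a : F ⊕ V))
  | one : PathRel (∑ v : V, FreeAlgebra.ι K (Sum.inr v : F ⊕ V)) 1

/-- The path algebra of the quiver. -/
abbrev PathAlg := RingQuot (PathRel K V F s t)

/-- The element of the path algebra given by an arrow. -/
noncomputable def arrowElem (a : F) : PathAlg K V F s t :=
  RingQuot.mkAlgHom K (PathRel K V F s t) (FreeAlgebra.ι K (Sum.inl a))

/-- The element of the path algebra given by a trivial path. -/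
noncomputable def vertElem (v : V) : PathAlg K V F s t :=
  RingQuot.mkAlgHom K (PathRel K V F s t) (FreeAlgebra.ι K (Sum.inr v))

/-- The element of the path algebra given by a list of arrows. -/
noncomputable def pathElem (l : List F) : PathAlg K V F s t :=
  (l.map (arrowElem K V F s t)).prod

end PathAlgebra

section Double

variable (K : Type*) [CommRing K]
variable (V : Type*) [Fintype V] (E : Type*) (s t : E → V)

/-- The involution * on the arrows of the double quiver. -/
def dstar : E ⊕ E → E ⊕ E := Sum.elim Sum.inr Sum.inl

/-- The sign ε: +1 on arrows of Q, -1 on reversed arrows. -/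
def dsgn : E ⊕ E → ℤ := Sum.elim (fun _ => 1) (fun _ => -1)

/-- Source of an arrow of the double quiver. -/
def dsrc : E ⊕ E → V := Sum.elim s t

/-- Target of an arrow of the double quiver. -/
def dtgt : E ⊕ E → V := Sum.elim t s

/-- A list of arrows of the double quiver forms a path when consecutive
arrows are composable. -/
def IsPath (l : List (E ⊕ E)) : Prop :=
  List.Chain' (fun a b => dtgt V E s t a = dsrc V E s t b) l

/-- The path algebra of the double quiver. -/
abbrev DPathAlg := PathAlg K V (E ⊕ E) (dsrc V E s t) (dtgt V E s t)

/-- The right-hand side of the defining formula for the necklace derivation: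
d_p(q) = Σ_i Σ_j ε(q_i) δ_{q_i^*, p_j} q_{<i} p_{>j} p_{<j} q_{>i}. -/
noncomputable def necklaceSum (p q : List (E ⊕ E)) : DPathAlg K V E s t :=
  ∑ i : Fin q.length, ∑ j : Fin p.length,
    if dstar E (q.get i) = p.get j then
      dsgn E (q.get i) •
        pathElem K V (E ⊕ E) (dsrc V E s t) (dtgt V E s t)
          (q.take i.val ++ p.drop (j.val + 1) ++ p.take j.val ++ q.drop (i.val + 1))
    else 0

end Double
/-- The necklace derivation d_p kills w = Σ_{a∈Q} [a,a*]: any derivation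
satisfying the necklace formula for p on paths sends w to 0. -/
theorem necklace_derivation_kills_w
    (K : Type*) [CommRing K] (V : Type*) [Fintype V] (E : Type*) [Fintype E] (s t : E → V)
    (p : List (E ⊕ E)) (hp : IsPath V E s t p)
    (d : DPathAlg K V E s t →ₗ[K] DPathAlg K V E s t)
    (hd : IsDerivation K d)
    (hdp : ∀ q : List (E ⊕ E), IsPath V E s t q →
      d (pathElem K V (E ⊕ E) (dsrc V E s t) (dtgt V E s t) q) = necklaceSum K V E s t p q) :
    d (∑ a : E,
        (arrowElem K V (E ⊕ E) (dsrc V E s t) (dtgt V E s t) (Sum.inl a) *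
           arrowElem K V (E ⊕ E) (dsrc V E s t) (dtgt V E s t) (Sum.inr a)
         - arrowElem K V (E ⊕ E) (dsrc V E s t) (dtgt V E s t) (Sum.inr a) *
           arrowElem K V (E ⊕ E) (dsrc V E s t) (dtgt V E s t) (Sum.inl a))) = 0 := by
  classical
  set P : List (E ⊕ E) → DPathAlg K V E s t :=
    pathElem K V (E ⊕ E) (dsrc V E s t) (dtgt V E s t) with hPdef
  set g : ℕ → DPathAlg K V E s t := fun j => P (p.drop j ++ p.take j) with hg
  have key : ∀ a : E,
      d (arrowElem K V (E ⊕ E) (dsrc V E s t) (dtgt V E s t) (Sum.inl a) *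
           arrowElem K V (E ⊕ E) (dsrc V E s t) (dtgt V E s t) (Sum.inr a)
         - arrowElem K V (E ⊕ E) (dsrc V E s t) (dtgt V E s t) (Sum.inr a) *
           arrowElem K V (E ⊕ E) (dsrc V E s t) (dtgt V E s t) (Sum.inl a))
      = ∑ j : Fin p.length,
          ((if Sum.inl a = p.get j then g (j.val + 1) - g j.val else 0)
           + (if Sum.inr a = p.get j then g (j.val + 1) - g j.val else 0)) := by
    intro a
    have h1 : IsPath V E s t [Sum.inl a, Sum.inr a] := by
      simp [IsPath, dsrc, dtgt, List.Chain']
    have h2 : IsPath V E s t [Sum.inr a, Sum.inl a] := by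
      simp [IsPath, dsrc, dtgt, List.Chain']
    have e1 : arrowElem K V (E ⊕ E) (dsrc V E s t) (dtgt V E s t) (Sum.inl a) *
        arrowElem K V (E ⊕ E) (dsrc V E s t) (dtgt V E s t) (Sum.inr a)
        = P [Sum.inl a, Sum.inr a] := by
      simp [hPdef, pathElem]
    have e2 : arrowElem K V (E ⊕ E) (dsrc V E s t) (dtgt V E s t) (Sum.inr a) *
        arrowElem K V (E ⊕ E) (dsrc V E s t) (dtgt V E s t) (Sum.inl a)
        = P [Sum.inr a, Sum.inl a] := by
      simp [hPdef, pathElem]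
    rw [map_sub, e1, e2, hdp _ h1, hdp _ h2]
    simp only [necklaceSum, List.length_cons, List.length_nil, ← hPdef]
    rw [Fin.sum_univ_two, Fin.sum_univ_two]
    have r1 : ([Sum.inl a, Sum.inr a] : List (E ⊕ E)).get (0 : Fin 2) = Sum.inl a := rfl
    have r2 : ([Sum.inl a, Sum.inr a] : List (E ⊕ E)).get (1 : Fin 2) = Sum.inr a := rfl
    have r3 : ([Sum.inr a, Sum.inl a] : List (E ⊕ E)).get (0 : Fin 2) = Sum.inr a := rfl
    have r4 : ([Sum.inr a, Sum.inl a] : List (E ⊕ E)).get (1 : Fin 2) = Sum.inl a := rfl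
    simp only [r1, r2, r3, r4, Fin.isValue, Fin.val_zero, Fin.val_one,
      dstar, dsgn, Sum.elim_inl, Sum.elim_inr,
      List.take_zero, List.nil_append, List.drop_succ_cons, List.drop_zero, List.drop_nil,
      List.take_succ_cons, List.take_nil, List.append_nil, one_smul, neg_one_smul, neg_smul]
    rw [add_sub_add_comm, ← Finset.sum_sub_distrib, ← Finset.sum_sub_distrib,
      ← Finset.sum_add_distrib]
    refine Finset.sum_congr rfl fun j _ => ?_
    have hjlt : (j : ℕ) < p.length := j.2
    have htake : (p.drop ((j : ℕ) + 1) ++ p.take (j : ℕ)) ++ [p.get j] = p.drop ((j:ℕ)+1) ++ p.take ((j:ℕ)+1) := by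
      rw [List.append_assoc]
      congr 1
      simpa using List.take_concat_get' p (j : ℕ) hjlt
    have hdrop : p.get j :: (p.drop ((j : ℕ) + 1) ++ p.take (j : ℕ)) = p.drop (j : ℕ) ++ p.take (j : ℕ) := by
      rw [← List.cons_append]
      congr 1
      exact List.cons_get_drop_succ
    rcases hx : p.get j with a0 | a0
    · rw [hx] at htake hdrop
      by_cases ha : a = a0
      · subst ha
        have t1 : ((Sum.inr a : E ⊕ E) = Sum.inl a) = False := by simp
        have t2 : ((Sum.inl a : E ⊕ E) = Sum.inl a) = True := by simp
        simp only [t1, t2, if_true, if_false, List.singleton_append, List.cons_append, List.nil_append]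
        rw [htake, hdrop]
        simp only [hg]
        abel
      · have t1 : ((Sum.inr a : E ⊕ E) = Sum.inl a0) = False := by simp
        have t2 : ((Sum.inl a : E ⊕ E) = Sum.inl a0) = False := by simp [ha]
        simp only [t1, t2, if_false]
        simp
    · rw [hx] at htake hdrop
      by_cases ha : a = a0
      · subst ha
        have t1 : ((Sum.inl a : E ⊕ E) = Sum.inr a) = False := by simp
        have t2 : ((Sum.inr a : E ⊕ E) = Sum.inr a) = True := by simp
        simp only [t1, t2, if_true, if_false, List.singleton_append, List.cons_append, List.nil_append]
        rw [htake, hdrop]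
        simp only [hg]
        abel
      · have t1 : ((Sum.inl a : E ⊕ E) = Sum.inr a0) = False := by simp
        have t2 : ((Sum.inr a : E ⊕ E) = Sum.inr a0) = False := by simp [ha]
        simp only [t1, t2, if_false]
        simp
  rw [map_sum]
  simp_rw [key]
  rw [Finset.sum_comm]
  have inner : ∀ j : Fin p.length,
      (∑ a : E, ((if Sum.inl a = p.get j then g ((j:ℕ) + 1) - g (j:ℕ) else 0)
        + (if Sum.inr a = p.get j then g ((j:ℕ) + 1) - g (j:ℕ) else 0)))
      = g ((j:ℕ) + 1) - g (j:ℕ) := by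
    intro j
    rw [Finset.sum_add_distrib]
    rcases hx : p.get j with a0 | a0
    · rw [Finset.sum_eq_single a0 (by intro b _ hb; rw [if_neg (by simp [hb])])
        (by intro h; exact absurd (Finset.mem_univ a0) h)]
      rw [if_pos rfl, Finset.sum_eq_zero (by intro b _; rw [if_neg (by simp)]), add_zero]
    · rw [Finset.sum_eq_zero (by intro b _; rw [if_neg (by simp)]),
        Finset.sum_eq_single a0 (by intro b _ hb; rw [if_neg (by simp [hb])])
        (by intro h; exact absurd (Finset.mem_univ a0) h), if_pos rfl, zero_add]
  simp_rw [inner]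
  rw [Fin.sum_univ_eq_sum_range (fun j => g (j + 1) - g j) p.length, Finset.sum_range_sub]
  have : g p.length = g 0 := by
    simp [hg]
  rw [this, sub_self]
end

section
/- Given a derivation d : A → A with d(e_v) = 0 for all v, there is a unique derivation d_α of the commutative algebra K[Rep(A,α)] satisfying d_α(a_{ij}) = d(a)_{ij} for all a ∈ A and 1 ≤ i,j ≤ n. -/
open scoped Classical

/-- The inner derivation x ↦ cx - xc. -/
def innerDer (K : Type*) {A : Type*} [CommRing K] [Ring A] [Algebra K A] (c : A) :
    A →ₗ[K] A :=
  LinearMap.mulLeft K c - LinearMap.mulRight K c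

section Rep

variable (K : Type*) (A : Type*) [CommRing K] [Ring A] [Algebra K A]
variable (m : ℕ) (e : Fin m → A) (α : Fin m → ℕ)

/-- e_1, ..., e_m is a complete set of orthogonal idempotents. -/
def CompleteOrthIdem : Prop :=
  (∀ v, e v * e v = e v) ∧ (∀ v w, v ≠ w → e v * e w = 0) ∧ (∑ v, e v = 1)

/-- n = Σ_v α_v. -/
def nn : ℕ := ∑ v, α v

/-- i lies in the v-th diagonal block. -/
def inBlock (v : Fin m) (i : Fin (nn m α)) : Prop :=
  (∑ w ∈ Finset.univ.filter (· < v), α w) ≤ i.val ∧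
    i.val < ∑ w ∈ Finset.univ.filter (· ≤ v), α w

/-- The entries of the diagonal 0-1 matrix Δ^v. -/
noncomputable def delta (v : Fin m) (i j : Fin (nn m α)) : K :=
  if i = j ∧ inBlock m α v i then 1 else 0

/-- The defining relations of the coordinate ring K[Rep(A,α)] among the
generators a_{ij}. -/
def repRels : Set (MvPolynomial (A × Fin (nn m α) × Fin (nn m α)) K) :=
  {P | (∃ (a b : A) (i j : Fin (nn m α)),
          P = MvPolynomial.X (a * b, i, j)
              - ∑ k, MvPolynomial.X (a, i, k) * MvPolynomial.X (b, k, j)) ∨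
       (∃ (a b : A) (i j : Fin (nn m α)),
          P = MvPolynomial.X (a + b, i, j) - MvPolynomial.X (a, i, j) - MvPolynomial.X (b, i, j)) ∨
       (∃ (c : K) (a : A) (i j : Fin (nn m α)),
          P = MvPolynomial.X (c • a, i, j) - MvPolynomial.C c * MvPolynomial.X (a, i, j)) ∨
       (∃ (v : Fin m) (i j : Fin (nn m α)),
          P = MvPolynomial.X (e v, i, j) - MvPolynomial.C (delta K m α v i j))}

/-- The coordinate ring K[Rep(A,α)] of the representation scheme. -/
abbrev RepRing := MvPolynomial (A × Fin (nn m α) × Fin (nn m α)) K ⧸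
  Ideal.span (repRels K A m e α)

/-- The generator a_{ij} of K[Rep(A,α)]. -/
noncomputable def repGen (a : A) (i j : Fin (nn m α)) : RepRing K A m e α :=
  Ideal.Quotient.mk _ (MvPolynomial.X (a, i, j))

/-- The trace function tr_α a = Σ_i a_{ii}. -/
noncomputable def trRep (a : A) : RepRing K A m e α :=
  ∑ i, repGen K A m e α a i i

/-- The trace algebra T(A,α), generated by the elements tr_α a. -/
noncomputable def traceAlg : Subalgebra K (RepRing K A m e α) :=
  Algebra.adjoin K (Set.range (trRep K A m e α))

end Rep
section AuxLemmas

variable (K : Type*) (A : Type*) [CommRing K] [Ring A] [Algebra K A]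
variable (m : ℕ) (e : Fin m → A) (α : Fin m → ℕ)

lemma repGen_mul' (a b : A) (i j : Fin (nn m α)) :
    repGen K A m e α (a * b) i j = ∑ k, repGen K A m e α a i k * repGen K A m e α b k j := by
  have hmem : (MvPolynomial.X (a * b, i, j)
      - ∑ k, MvPolynomial.X (a, i, k) * MvPolynomial.X (b, k, j))
      ∈ Ideal.span (repRels K A m e α) :=
    Ideal.subset_span (Or.inl ⟨a, b, i, j, rfl⟩)
  have h0 := Ideal.Quotient.eq_zero_iff_mem.mpr hmem
  rw [map_sub, sub_eq_zero] at h0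
  simpa [repGen, map_sum] using h0

lemma repGen_add' (a b : A) (i j : Fin (nn m α)) :
    repGen K A m e α (a + b) i j = repGen K A m e α a i j + repGen K A m e α b i j := by
  have hmem : (MvPolynomial.X (a + b, i, j) - MvPolynomial.X (a, i, j)
      - MvPolynomial.X (b, i, j)) ∈ Ideal.span (repRels K A m e α) :=
    Ideal.subset_span (Or.inr (Or.inl ⟨a, b, i, j, rfl⟩))
  have h0 := Ideal.Quotient.eq_zero_iff_mem.mpr hmem
  rw [map_sub, map_sub, sub_sub, sub_eq_zero] at h0
  simpa [repGen] using h0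

lemma repGen_smul' (c : K) (a : A) (i j : Fin (nn m α)) :
    repGen K A m e α (c • a) i j = c • repGen K A m e α a i j := by
  have hmem : (MvPolynomial.X (c • a, i, j) - MvPolynomial.C c * MvPolynomial.X (a, i, j))
      ∈ Ideal.span (repRels K A m e α) :=
    Ideal.subset_span (Or.inr (Or.inr (Or.inl ⟨c, a, i, j, rfl⟩)))
  have h0 := Ideal.Quotient.eq_zero_iff_mem.mpr hmem
  rw [map_sub, sub_eq_zero, map_mul] at h0
  rw [repGen, h0, ← MvPolynomial.algebraMap_eq, ← Ideal.Quotient.algebraMap_eq,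
    ← IsScalarTower.algebraMap_apply, ← Algebra.smul_def, Ideal.Quotient.algebraMap_eq]
  rfl

lemma repGen_zero' (i j : Fin (nn m α)) : repGen K A m e α (0 : A) i j = 0 := by
  have h := repGen_add' K A m e α 0 0 i j
  rw [add_zero] at h
  exact (right_eq_add.mp h)

end AuxLemmas

set_option maxHeartbeats 2000000 in
/-- Given a derivation d of A with d(e_v) = 0 for all v, there is a unique
derivation d_α of K[Rep(A,α)] with d_α(a_{ij}) = d(a)_{ij}. -/
theorem induced_derivation_on_repRing
    (K : Type*) (A : Type*) [CommRing K] [Ring A] [Algebra K A]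
    (m : ℕ) (e : Fin m → A) (α : Fin m → ℕ)
    (he : CompleteOrthIdem A m e)
    (d : A →ₗ[K] A) (hd : IsDerivation K d) (hde : ∀ v, d (e v) = 0) :
    ∃! D : RepRing K A m e α →ₗ[K] RepRing K A m e α,
      IsDerivation K D ∧
      ∀ (a : A) (i j : Fin (nn m α)),
        D (repGen K A m e α a i j) = repGen K A m e α (d a) i j := by
  classical
  set I : Ideal (MvPolynomial (A × Fin (nn m α) × Fin (nn m α)) K) :=
    Ideal.span (repRels K A m e α) with hI
  let D0 : Derivation K (MvPolynomial (A × Fin (nn m α) × Fin (nn m α)) K)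
      (RepRing K A m e α) :=
    MvPolynomial.mkDerivation K (fun s => repGen K A m e α (d s.1) s.2.1 s.2.2)
  have hD0X : ∀ (a : A) (i j : Fin (nn m α)),
      D0 (MvPolynomial.X (a, i, j)) = repGen K A m e α (d a) i j := fun a i j =>
    MvPolynomial.mkDerivation_X _ _ _
  have hsmul : ∀ (p : MvPolynomial (A × Fin (nn m α) × Fin (nn m α)) K)
      (x : RepRing K A m e α), p • x = Ideal.Quotient.mk I p * x := by
    intro p x
    obtain ⟨y, rfl⟩ := Ideal.Quotient.mk_surjective x
    rw [← map_mul]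
    rfl
  have hmkX : ∀ (a : A) (i j : Fin (nn m α)),
      Ideal.Quotient.mk I (MvPolynomial.X (a, i, j)) = repGen K A m e α a i j :=
    fun a i j => rfl
  have hgen : ∀ P ∈ repRels K A m e α, D0 P = 0 := by
    rintro P (⟨a, b, i, j, rfl⟩ | ⟨a, b, i, j, rfl⟩ | ⟨c, a, i, j, rfl⟩ | ⟨v, i, j, rfl⟩)
    · rw [map_sub, map_sum, hD0X, hd a b, repGen_add', repGen_mul', repGen_mul']
      have : ∀ k ∈ Finset.univ,
          D0 (MvPolynomial.X (a, i, k) * MvPolynomial.X (b, k, j)) =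
            repGen K A m e α a i k * repGen K A m e α (d b) k j +
              repGen K A m e α (d a) i k * repGen K A m e α b k j := by
        intro k _
        rw [Derivation.leibniz, hsmul, hsmul, hD0X, hD0X, hmkX, hmkX, mul_comm (repGen K A m e α b k j)]
      rw [Finset.sum_congr rfl this, Finset.sum_add_distrib]
      abel
    · rw [map_sub, map_sub, hD0X, hD0X, hD0X, map_add d, repGen_add']
      abel
    · rw [map_sub, hD0X, map_smul d, repGen_smul', Derivation.leibniz, MvPolynomial.derivation_C,
        smul_zero, add_zero, hsmul, hD0X, ← Ideal.Quotient.algebraMap_eq,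
        ← MvPolynomial.algebraMap_eq, ← IsScalarTower.algebraMap_apply, ← Algebra.smul_def]
      abel
    · rw [map_sub, hD0X, hde v, MvPolynomial.derivation_C, repGen_zero', sub_zero]
  have hvanI : ∀ P ∈ I, D0 P = 0 := by
    intro P hP
    have hP' : P ∈ Submodule.span (MvPolynomial (A × Fin (nn m α) × Fin (nn m α)) K)
        (repRels K A m e α) := hP
    clear hP
    induction hP' using Submodule.span_induction with
    | mem x hx => exact hgen x hx
    | zero => exact map_zero _
    | add x y _ _ hx hy => rw [map_add, hx, hy, add_zero]
    | smul r x hxI hx =>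
        rw [smul_eq_mul, Derivation.leibniz, hx, smul_zero, zero_add, hsmul,
          (Ideal.Quotient.eq_zero_iff_mem (I := I)).mpr hxI, zero_mul]
  let D : RepRing K A m e α →ₗ[K] RepRing K A m e α :=
    Submodule.liftQ (I.restrictScalars K) D0.toLinearMap (fun x hx => hvanI x hx)
  have hDmk : ∀ p, D (Ideal.Quotient.mk I p) = D0 p := fun p => rfl
  have hDval : ∀ (a : A) (i j : Fin (nn m α)),
      D (repGen K A m e α a i j) = repGen K A m e α (d a) i j := fun a i j => by
    rw [← hmkX, hDmk, hD0X]
  have hDder : IsDerivation K D := by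
    intro x y
    obtain ⟨p, rfl⟩ := Ideal.Quotient.mk_surjective x
    obtain ⟨q, rfl⟩ := Ideal.Quotient.mk_surjective y
    rw [← map_mul, hDmk, hDmk, hDmk, Derivation.leibniz, hsmul, hsmul, mul_comm (Ideal.Quotient.mk I q)]
  have hone : ∀ (E : RepRing K A m e α →ₗ[K] RepRing K A m e α),
      IsDerivation K E → E 1 = 0 := by
    intro E hE
    have h := hE 1 1
    rw [mul_one, one_mul, mul_one] at h
    exact right_eq_add.mp h
  have hC : ∀ (E : RepRing K A m e α →ₗ[K] RepRing K A m e α),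
      IsDerivation K E → ∀ c : K, E (Ideal.Quotient.mk I (MvPolynomial.C c)) = 0 := by
    intro E hE c
    have h1 : (MvPolynomial.C c : MvPolynomial (A × Fin (nn m α) × Fin (nn m α)) K) = c • 1 := by
      rw [MvPolynomial.smul_eq_C_mul, mul_one]
    have h2 : (Ideal.Quotient.mk I (MvPolynomial.C c) : RepRing K A m e α)
        = c • Ideal.Quotient.mk I 1 := by
      rw [h1]; rfl
    rw [h2, map_smul, map_one, hone E hE, smul_zero]
  refine ⟨D, ⟨hDder, hDval⟩, ?_⟩
  rintro D' ⟨hD'der, hD'val⟩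
  apply LinearMap.ext
  intro x
  obtain ⟨p, rfl⟩ := Ideal.Quotient.mk_surjective x
  induction p using MvPolynomial.induction_on with
  | C c => rw [hC D' hD'der, hC D hDder]
  | add p q hp hq => rw [map_add (Ideal.Quotient.mk I), map_add D', map_add D, hp, hq]
  | mul_X p s hp =>
      have hmk : (Ideal.Quotient.mk I) (p * MvPolynomial.X s) =
          (Ideal.Quotient.mk I) p * repGen K A m e α s.1 s.2.1 s.2.2 := by
        rw [map_mul]; rfl
      rw [hmk, hD'der, hDder, hp, hD'val, hDval]
end

section
/- Given a noncommutative Poisson structure ⟨-,-⟩ on A, for each a ∈ A one may choose a representing derivation d_a with d_a(e_v) = 0 for all v: if d is any derivation inducing ⟨ā,-⟩, then there exists a' ∈ A such that x ↦ d(x) − [a',x] is a derivation vanishing on all e_v and still inducing ⟨ā,-⟩ on A/[A,A]. -/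
open scoped Classical

/-- Representing derivations of a noncommutative Poisson structure can be
chosen to vanish on the idempotents e_v, by subtracting an inner derivation. -/
theorem representing_derivation_kills_idempotents
    (K : Type*) (A : Type*) [Field K] [CharZero K] [Ring A] [Algebra K A]
    (m : ℕ) (e : Fin m → A)
    (he : CompleteOrthIdem A m e)
    (B : (A ⧸ commSpan K A) →ₗ[K] (A ⧸ commSpan K A) →ₗ[K] (A ⧸ commSpan K A))
    (halt : ∀ x, B x x = 0)
    (hjac : ∀ x y z, B x (B y z) + B y (B z x) + B z (B x y) = 0)
    (hrep : ∀ a : A, ∃ d : A →ₗ[K] A, IsDerivation K d ∧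
      ∀ b : A, B (Submodule.Quotient.mk a) (Submodule.Quotient.mk b)
          = Submodule.Quotient.mk (d b))
    (a : A) (d : A →ₗ[K] A) (hd : IsDerivation K d)
    (hda : ∀ b : A, B (Submodule.Quotient.mk a) (Submodule.Quotient.mk b)
      = Submodule.Quotient.mk (d b)) :
    ∃ a' : A,
      IsDerivation K (d - innerDer K a') ∧
      (∀ v, (d - innerDer K a') (e v) = 0) ∧
      ∀ b : A, B (Submodule.Quotient.mk a) (Submodule.Quotient.mk b)
        = Submodule.Quotient.mk ((d - innerDer K a') b) := by
  obtain ⟨h1, h2, h3⟩ := he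
  set a' : A := ∑ v, d (e v) * e v with ha'
  -- e w * d (e w) * e w = 0
  have hx : ∀ w, e w * d (e w) * e w = 0 := by
    intro w
    have h : d (e w) = e w * d (e w) + d (e w) * e w := by
      have h := hd (e w) (e w); rw [h1 w] at h; exact h
    have key : e w * d (e w) * e w
        = e w * d (e w) * e w + e w * d (e w) * e w := by
      calc e w * d (e w) * e w
          = e w * (e w * d (e w) + d (e w) * e w) * e w := by rw [← h]
        _ = (e w * e w) * d (e w) * e w + e w * (d (e w) * (e w * e w)) := by
            noncomm_ring
        _ = e w * d (e w) * e w + e w * (d (e w) * e w) := by rw [h1 w]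
        _ = e w * d (e w) * e w + e w * d (e w) * e w := by noncomm_ring
    exact (left_eq_add.mp key)
  have hcross : ∀ v w : Fin m, w ≠ v → e w * d (e v) = -(d (e w) * e v) := by
    intro v w hwv
    have h := hd (e w) (e v)
    rw [h2 w v hwv, map_zero] at h
    exact eq_neg_of_add_eq_zero_left h.symm
  have hleft : ∀ w, a' * e w = d (e w) * e w := by
    intro w
    rw [ha', Finset.sum_mul, Finset.sum_eq_single w]
    · rw [mul_assoc, h1 w]
    · intro v _ hv
      rw [mul_assoc, h2 v w hv, mul_zero]
    · intro h; exact absurd (Finset.mem_univ w) h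
  have herase : ∀ w, ∑ v ∈ Finset.univ.erase w, e v = 1 - e w := by
    intro w
    have h := Finset.add_sum_erase Finset.univ e (Finset.mem_univ w)
    rw [h3] at h
    exact eq_sub_of_add_eq' h
  have hright : ∀ w, e w * a' = -(d (e w)) + d (e w) * e w := by
    intro w
    have hsplit : e w * a' = ∑ v ∈ Finset.univ.erase w, -(d (e w) * e v) := by
      rw [ha', Finset.mul_sum,
        ← Finset.add_sum_erase Finset.univ _ (Finset.mem_univ w)]
      rw [← mul_assoc, hx w, zero_add]
      refine Finset.sum_congr rfl ?_
      intro v hv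
      have hvw : w ≠ v := fun hh => (Finset.mem_erase.mp hv).1 hh.symm
      rw [← mul_assoc, hcross v w hvw, neg_mul, mul_assoc, h1 v]
    rw [hsplit, Finset.sum_neg_distrib, ← Finset.mul_sum, herase w]
    noncomm_ring
  refine ⟨a', ?_, ?_, ?_⟩
  · intro x y
    have hxy := hd x y
    simp only [LinearMap.sub_apply, innerDer, LinearMap.mulLeft_apply,
      LinearMap.mulRight_apply, hxy]
    noncomm_ring
  · intro v
    simp only [LinearMap.sub_apply, innerDer, LinearMap.mulLeft_apply,
      LinearMap.mulRight_apply, hleft v, hright v]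
    abel
  · intro b
    rw [hda b, Submodule.Quotient.eq]
    have hdiff : d b - (d - innerDer K a') b = a' * b - b * a' := by
      simp only [LinearMap.sub_apply, innerDer, LinearMap.mulLeft_apply,
        LinearMap.mulRight_apply]
      abel
    rw [hdiff]
    exact Submodule.subset_span ⟨a', b, rfl⟩
end
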